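/- There exist a FAM mechanism ψ, a preference profile P, and a Nash equilibrium P' of ψ at P such that ψ(P') assigns strictly more students than every stable matching of P. Concretely: students {i,j,k,h}, schools {a,b,c} of capacity 1, preferences P_i: a,b,∅; P_j: c,a,∅; P_k: c,a,∅; P_h: c,∅; priorities ≻_a: k,i,j,h; ≻_b: k,h,j,i; ≻_c: k,h,i,j. Truth-telling is an equilibrium of a suitable FAM mechanism with outcome assigning 3 students (i→b, j→a, k→c), while the deferred acceptance matching assigns only 2 students (i→a, k→c). -/

import Mathlib

open Finset
open scoped Classical

/-- A matching assigns each student a school or `none` (unassigned). -/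
abbrev Matching (I S : Type*) := I → Option S

/-- An individual strict preference over `S ∪ {∅}`: an injective utility
function on `Option S` (higher value = more preferred, `none` = being
unassigned). -/
abbrev IndPref (S : Type*) := {f : Option S → ℕ // Function.Injective f}

/-- A preference profile: one strict preference per student. -/
abbrev Prof (I S : Type*) := I → IndPref S

/-- Strict school priorities: for each school, an injective rank over
students (higher value = higher priority). -/
abbrev Prio (I S : Type*) := {p : S → I → ℕ // ∀ s, Function.Injective (p s)}

/-- A mechanism maps reported preference profiles to matchings. -/
abbrev Mechanism (I S : Type*) := Prof I S → Matching I S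

variable {I S : Type*} [Fintype I] [DecidableEq I] [Fintype S] [DecidableEq S]

/-- Capacity feasibility. -/
def Feasible (q : S → ℕ) (μ : Matching I S) : Prop :=
  ∀ s : S, (univ.filter fun i => μ i = some s).card ≤ q s

/-- Individual rationality with respect to profile `P`. -/
def IndivRational (P : Prof I S) (μ : Matching I S) : Prop :=
  ∀ i, (P i).1 none ≤ (P i).1 (μ i)

/-- Number of assigned students. -/
def msize (μ : Matching I S) : ℕ := (univ.filter fun i => μ i ≠ none).card

/-- Maximality: no feasible individually rational matching assigns strictly
more students. -/
def MaximalMatching (P : Prof I S) (q : S → ℕ) (μ : Matching I S) : Prop :=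
  ∀ μ' : Matching I S, Feasible q μ' → IndivRational P μ' → msize μ' ≤ msize μ

/-- `μ'` Pareto dominates `μ`. -/
def Dominates (P : Prof I S) (μ' μ : Matching I S) : Prop :=
  (∀ i, (P i).1 (μ i) ≤ (P i).1 (μ' i)) ∧ ∃ j, (P j).1 (μ j) < (P j).1 (μ' j)

/-- Pareto efficiency among feasible individually rational matchings. -/
def Efficient (P : Prof I S) (q : S → ℕ) (μ : Matching I S) : Prop :=
  ¬ ∃ μ', Feasible q μ' ∧ IndivRational P μ' ∧ Dominates P μ' μ

/-- Non-wastefulness. -/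
def NonWasteful (P : Prof I S) (q : S → ℕ) (μ : Matching I S) : Prop :=
  ∀ i s, (P i).1 (μ i) < (P i).1 (some s) →
    (univ.filter fun j => μ j = some s).card = q s

/-- Fairness (no justified envy). -/
def Fair (P : Prof I S) (pr : Prio I S) (μ : Matching I S) : Prop :=
  ¬ ∃ i s j, (P i).1 (μ i) < (P i).1 (some s) ∧ μ j = some s ∧ pr.1 s j < pr.1 s i

/-- Stability: individually rational, non-wasteful and fair. -/
def Stable (P : Prof I S) (pr : Prio I S) (q : S → ℕ) (μ : Matching I S) : Prop :=
  Feasible q μ ∧ IndivRational P μ ∧ NonWasteful P q μ ∧ Fair P pr μ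

/-- Fairness for unassigned students. -/
def FairForUnassigned (P : Prof I S) (pr : Prio I S) (μ : Matching I S) : Prop :=
  ¬ ∃ i s j, μ i = none ∧ (P i).1 none < (P i).1 (some s) ∧ μ j = some s ∧
    pr.1 s j < pr.1 s i

/-- `(a, t)` is an improving chain for `μ`: each student `a k` strictly
prefers `t k` to their assignment, each school `t k` (for `k < n`) is
currently occupied by the next student `a (k+1)`, and the last school has
excess capacity. -/
def IsImpChain (P : Prof I S) (q : S → ℕ) (μ : Matching I S)
    (n : ℕ) (a : Fin (n + 1) → I) (t : Fin (n + 1) → S) : Prop :=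
  Function.Injective a ∧
  (∀ k, (P (a k)).1 (μ (a k)) < (P (a k)).1 (some (t k))) ∧
  (∀ k : Fin n, μ (a k.succ) = some (t k.castSucc)) ∧
  (univ.filter fun j => μ j = some (t (Fin.last n))).card < q (t (Fin.last n))

/-- `(a, t)` is an improving cycle for `μ`: each student `a k` is assigned
to `t k` and strictly prefers the school `t (k+1)` vacated by the next
student in the cycle. -/
def IsImpCycle (P : Prof I S) (μ : Matching I S)
    (n : ℕ) (a : Fin (n + 1) → I) (t : Fin (n + 1) → S) : Prop :=
  Function.Injective a ∧
  (∀ k, μ (a k) = some (t k)) ∧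
  (∀ k, (P (a k)).1 (some (t k)) < (P (a k)).1 (some (t (k + 1))))

def HasImpChain (P : Prof I S) (q : S → ℕ) (μ : Matching I S) : Prop :=
  ∃ n a t, IsImpChain P q μ n a t

def HasImpCycle (P : Prof I S) (μ : Matching I S) : Prop :=
  ∃ n a t, IsImpCycle P μ n a t

/-- Implementing one improving chain or cycle: every student involved moves
to the school they prefer in the chain/cycle, all others keep their
assignment. -/
def ImplementStep (P : Prof I S) (q : S → ℕ) (μ μ' : Matching I S) : Prop :=
  (∃ n a t, IsImpChain P q μ n a t ∧ (∀ k, μ' (a k) = some (t k)) ∧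
    ∀ j, (∀ k, j ≠ a k) → μ' j = μ j) ∨
  (∃ n a t, IsImpCycle P μ n a t ∧ (∀ k, μ' (a k) = some (t (k + 1))) ∧
    ∀ j, (∀ k, j ≠ a k) → μ' j = μ j)

/-- One refinement step of the first stage of EAM: keep only the matchings
assigning student `i`, whenever such matchings exist. -/
noncomputable def xiStep (A : Set (Matching I S)) (i : I) : Set (Matching I S) :=
  if ∃ μ ∈ A, μ i ≠ none then {μ ∈ A | μ i ≠ none} else A

/-- The set `ξ^n` of the first stage of EAM, for the enumeration `L` of the
students, starting from all feasible individually rational matchings. -/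
noncomputable def xiList (P : Prof I S) (q : S → ℕ) (L : List I) :
    Set (Matching I S) :=
  L.foldl xiStep {μ | Feasible q μ ∧ IndivRational P μ}

/-- `μ` is a possible outcome of an EAM procedure with student enumeration
`L`: it is reachable from some matching selected in the first stage by
implementing improving chains/cycles, and admits no further improving chain
or cycle. -/
def IsEAMOutcome (P : Prof I S) (q : S → ℕ) (L : List I) (μ : Matching I S) :
    Prop :=
  ∃ μ₀ ∈ xiList P q L, Relation.ReflTransGen (ImplementStep P q) μ₀ μ ∧
    ¬ HasImpChain P q μ ∧ ¬ HasImpCycle P μ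

/-- EAM mechanisms with enumeration `L`. -/
def IsEAMMech (q : S → ℕ) (L : List I) (ψ : Mechanism I S) : Prop :=
  ∀ P, IsEAMOutcome P q L (ψ P)

/-- One sub-step of Step 2 of FAM: a pair `(i, s)` violating fairness for
unassigned students is resolved by placing `i` at `s` and unassigning the
lowest-priority student currently matched to `s`. -/
def FairStep (P : Prof I S) (pr : Prio I S) (μ μ' : Matching I S) : Prop :=
  ∃ i s j, μ i = none ∧ (P i).1 none < (P i).1 (some s) ∧ μ j = some s ∧
    pr.1 s j < pr.1 s i ∧ (∀ j', μ j' = some s → pr.1 s j ≤ pr.1 s j') ∧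
    μ' = Function.update (Function.update μ j none) i (some s)

/-- FAM mechanisms: an EAM first stage followed by iterated resolution of
violations of fairness for unassigned students. -/
def IsFAMMech (q : S → ℕ) (pr : Prio I S) (L : List I) (ψ : Mechanism I S) :
    Prop :=
  ∀ P, ∃ μ₁, IsEAMOutcome P q L μ₁ ∧
    Relation.ReflTransGen (FairStep P pr) μ₁ (ψ P) ∧
    FairForUnassigned P pr (ψ P)

/-- Individually rational mechanism (with respect to reports). -/
def IRMech (q : S → ℕ) (ψ : Mechanism I S) : Prop :=
  ∀ P, Feasible q (ψ P) ∧ IndivRational P (ψ P)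

/-- MaximalMatching mechanism. -/
def MaximalMech (q : S → ℕ) (ψ : Mechanism I S) : Prop :=
  IRMech q ψ ∧ ∀ P, MaximalMatching P q (ψ P)

/-- Nash equilibrium of the preference-reporting game induced by `ψ`, with
true preferences `u`. -/
def NashEq (u : Prof I S) (ψ : Mechanism I S) (P' : Prof I S) : Prop :=
  ∀ (i : I) (Pi'' : IndPref S),
    (u i).1 (ψ (Function.update P' i Pi'') i) ≤ (u i).1 (ψ P' i)

/-- Strategy-proofness. -/
def StrategyProof (ψ : Mechanism I S) : Prop :=
  ∀ (P : Prof I S) (i : I) (Pi' : IndPref S),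
    (P i).1 (ψ (Function.update P i Pi') i) ≤ (P i).1 (ψ P i)

/-- A maximizer of `f` on the nonempty finite set `A`. -/
noncomputable def bestOf (f : Option S → ℕ) (A : Finset (Option S))
    (h : A.Nonempty) : Option S :=
  (Finset.exists_max_image A f h).choose

/-- Serial dictatorship: students pick, in the order given, their most
preferred option among `none` and the schools with remaining capacity. -/
noncomputable def sdRun (P : Prof I S) :
    List I → (S → ℕ) → Matching I S → Matching I S
  | [], _, μ => μ
  | i :: rest, rem, μ =>
    let c := bestOf (P i).1 (insert none ((univ.filter fun s => 0 < rem s).image some))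
      (insert_nonempty _ _)
    sdRun P rest (fun s => if c = some s then rem s - 1 else rem s)
      (Function.update μ i c)

/-- The serial dictatorship outcome with ordering `L` and capacities `q`. -/
noncomputable def SD (P : Prof I S) (q : S → ℕ) (L : List I) : Matching I S :=
  sdRun P L q fun _ => none


/-- Unit capacities. -/
def q13 : Fin 3 → ℕ := fun _ => 1

/-- Students i,j,k,h = 0,1,2,3; schools a,b,c = 0,1,2.
Preferences: i: a,b,∅ ; j: c,a,∅ ; k: c,a,∅ ; h: c,∅. -/
def u13 : Prof (Fin 4) (Fin 3) := fun i =>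
  if i = 0 then ⟨fun o => match o with | none => 1 | some s => ![3, 2, 0] s, by decide⟩
  else if i = 3 then ⟨fun o => match o with | none => 2 | some s => ![1, 0, 3] s, by decide⟩
  else ⟨fun o => match o with | none => 1 | some s => ![2, 0, 3] s, by decide⟩

/-- Priorities: ≻_a: k,i,j,h ; ≻_b: k,h,j,i ; ≻_c: k,h,i,j. -/
def pr13 : Prio (Fin 4) (Fin 3) :=
  ⟨fun s => if s = 0 then ![2, 1, 3, 0] else if s = 1 then ![0, 1, 3, 2]
    else ![1, 0, 3, 2], by decide⟩

/-- The claimed FAM truth-telling outcome: i → b, j → a, k → c, h unassigned. -/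
def mu13 : Matching (Fin 4) (Fin 3) := ![some 1, some 0, some 2, none]

/-- The DA outcome: i → a, k → c, j and h unassigned. -/
def muDA13 : Matching (Fin 4) (Fin 3) := ![some 0, none, some 2, none]

set_option linter.unusedSectionVars false

namespace FAM13

section Basics
variable {I S : Type*} [Fintype I] [DecidableEq I] [Fintype S] [DecidableEq S]

lemma xiStep_pos {A : Set (Matching I S)} {i : I} (h : ∃ μ ∈ A, μ i ≠ none) :
    xiStep A i = {μ ∈ A | μ i ≠ none} := by unfold xiStep; exact if_pos h

lemma xiStep_neg {A : Set (Matching I S)} {i : I} (h : ¬ ∃ μ ∈ A, μ i ≠ none) :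
    xiStep A i = A := by unfold xiStep; exact if_neg h

lemma occupied {μ : Matching I S} {s : S} {j : I} (h : μ j = some s) :
    0 < (univ.filter fun i => μ i = some s).card :=
  Finset.card_pos.2 ⟨j, Finset.mem_filter.2 ⟨Finset.mem_univ _, h⟩⟩

lemma feas_inj {q : S → ℕ} (hq : ∀ s, q s ≤ 1) {μ : Matching I S} (hf : Feasible q μ)
    {x y : I} {s : S} (hx : μ x = some s) (hy : μ y = some s) : x = y := by
  by_contra hne
  have hsub : ({x, y} : Finset I) ⊆ univ.filter fun i => μ i = some s := by
    intro z hz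
    simp only [Finset.mem_insert, Finset.mem_singleton] at hz
    rcases hz with rfl | rfl <;> exact Finset.mem_filter.2 ⟨Finset.mem_univ _, by assumption⟩
  have h2 : ({x, y} : Finset I).card = 2 := Finset.card_pair hne
  have h3 := Finset.card_le_card hsub
  have h4 := hf s
  have h5 := hq s
  omega

noncomputable def Wel (P : Prof I S) (μ : Matching I S) : ℕ := ∑ i, (P i).1 (μ i)

lemma step_of_imp {P : Prof I S} {q : S → ℕ} {μ : Matching I S}
    (h : HasImpChain P q μ ∨ HasImpCycle P μ) :
    ∃ μ', ImplementStep P q μ μ' ∧ Wel P μ < Wel P μ' := by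
  rcases h with ⟨n, a, t, ha, hpref, hmid, hlast⟩ | ⟨n, a, t, ha, hass, hpref⟩
  · refine ⟨fun j => if h : ∃ k, a k = j then some (t h.choose) else μ j, ?_, ?_⟩
    · refine Or.inl ⟨n, a, t, ⟨ha, hpref, hmid, hlast⟩, ?_, ?_⟩
      · intro k
        have hex : ∃ k', a k' = a k := ⟨k, rfl⟩
        simp only [dif_pos hex]
        exact congrArg (some ∘ t) (ha hex.choose_spec)
      · intro j hj
        exact dif_neg (by rintro ⟨k, rfl⟩; exact hj k rfl)
    · apply Finset.sum_lt_sum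
      · intro i _
        by_cases hex : ∃ k, a k = i
        · obtain ⟨k, rfl⟩ := hex
          have hex' : ∃ k', a k' = a k := ⟨k, rfl⟩
          simp only [dif_pos hex']
          have := (hpref k).le
          calc (P (a k)).1 (μ (a k)) ≤ (P (a k)).1 (some (t k)) := this
          _ = _ := by rw [ha hex'.choose_spec]
        · simp only [dif_neg hex]; exact le_rfl
      · refine ⟨a 0, Finset.mem_univ _, ?_⟩
        have hex' : ∃ k', a k' = a 0 := ⟨0, rfl⟩
        simp only [dif_pos hex']
        calc (P (a 0)).1 (μ (a 0)) < (P (a 0)).1 (some (t 0)) := hpref 0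
        _ = _ := by rw [ha hex'.choose_spec]
  · refine ⟨fun j => if h : ∃ k, a k = j then some (t (h.choose + 1)) else μ j, ?_, ?_⟩
    · refine Or.inr ⟨n, a, t, ⟨ha, hass, hpref⟩, ?_, ?_⟩
      · intro k
        have hex : ∃ k', a k' = a k := ⟨k, rfl⟩
        simp only [dif_pos hex]
        exact congrArg (fun k' => some (t (k' + 1))) (ha hex.choose_spec)
      · intro j hj
        exact dif_neg (by rintro ⟨k, rfl⟩; exact hj k rfl)
    · apply Finset.sum_lt_sum
      · intro i _
        by_cases hex : ∃ k, a k = i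
        · obtain ⟨k, rfl⟩ := hex
          have hex' : ∃ k', a k' = a k := ⟨k, rfl⟩
          simp only [dif_pos hex']
          calc (P (a k)).1 (μ (a k)) = (P (a k)).1 (some (t k)) := by rw [hass k]
          _ ≤ (P (a k)).1 (some (t (k + 1))) := (hpref k).le
          _ = _ := by rw [ha hex'.choose_spec]
        · simp only [dif_neg hex]; exact le_rfl
      · refine ⟨a 0, Finset.mem_univ _, ?_⟩
        have hex' : ∃ k', a k' = a 0 := ⟨0, rfl⟩
        simp only [dif_pos hex']
        calc (P (a 0)).1 (μ (a 0)) = (P (a 0)).1 (some (t 0)) := by rw [hass 0]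
        _ < (P (a 0)).1 (some (t (0 + 1))) := hpref 0
        _ = _ := by rw [ha hex'.choose_spec]

lemma exists_terminal (P : Prof I S) (q : S → ℕ) (μ : Matching I S) :
    ∃ μ', Relation.ReflTransGen (ImplementStep P q) μ μ' ∧
      ¬ HasImpChain P q μ' ∧ ¬ HasImpCycle P μ' := by
  set B := ∑ i : I, Finset.univ.sup (P i).1 with hB
  have hbd : ∀ ν : Matching I S, Wel P ν ≤ B :=
    fun ν => Finset.sum_le_sum fun i _ => Finset.le_sup (Finset.mem_univ _)
  have key : ∀ d (ν : Matching I S), B - Wel P ν ≤ d →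
      ∃ μ', Relation.ReflTransGen (ImplementStep P q) ν μ' ∧
        ¬ HasImpChain P q μ' ∧ ¬ HasImpCycle P μ' := by
    intro d
    induction d with
    | zero =>
      intro ν hν
      by_cases hterm : HasImpChain P q ν ∨ HasImpCycle P ν
      · exfalso
        obtain ⟨ν', _, hlt⟩ := step_of_imp hterm
        have := hbd ν'
        omega
      · push_neg at hterm
        exact ⟨ν, Relation.ReflTransGen.refl, hterm.1, hterm.2⟩
    | succ d ih =>
      intro ν hν
      by_cases hterm : HasImpChain P q ν ∨ HasImpCycle P ν
      · obtain ⟨ν', hstep, hlt⟩ := step_of_imp hterm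
        have hb := hbd ν'
        obtain ⟨μ', hrt, h1, h2⟩ := ih ν' (by omega)
        exact ⟨μ', Relation.ReflTransGen.head hstep hrt, h1, h2⟩
      · push_neg at hterm
        exact ⟨ν, Relation.ReflTransGen.refl, hterm.1, hterm.2⟩
  exact key (B - Wel P μ) μ le_rfl

noncomputable def Vmeas (pr : Prio I S) (μ : Matching I S) : ℕ :=
  ∑ i, (μ i).elim 0 (fun s => pr.1 s i + 1)

lemma fair_step {P : Prof I S} {pr : Prio I S} {μ : Matching I S}
    (h : ¬ FairForUnassigned P pr μ) :
    ∃ μ', FairStep P pr μ μ' ∧ Vmeas pr μ < Vmeas pr μ' := by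
  rw [FairForUnassigned, not_not] at h
  obtain ⟨i, s, j₀, hi, hpref, hj₀, hprj₀⟩ := h
  obtain ⟨j, hjmem, hjmin⟩ := Finset.exists_min_image
    (univ.filter fun j => μ j = some s) (fun j => pr.1 s j)
    ⟨j₀, Finset.mem_filter.2 ⟨Finset.mem_univ _, hj₀⟩⟩
  have hj : μ j = some s := (Finset.mem_filter.1 hjmem).2
  have hij : i ≠ j := fun he => by rw [he, hj] at hi; cases hi
  have hprj : pr.1 s j < pr.1 s i :=
    lt_of_le_of_lt (hjmin j₀ (Finset.mem_filter.2 ⟨Finset.mem_univ _, hj₀⟩)) hprj₀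
  refine ⟨Function.update (Function.update μ j none) i (some s),
    ⟨i, s, j, hi, hpref, hj, hprj,
      fun j' hj' => hjmin j' (Finset.mem_filter.2 ⟨Finset.mem_univ _, hj'⟩), rfl⟩, ?_⟩
  set μ' := Function.update (Function.update μ j none) i (some s) with hμ'
  set f := fun x => (μ x).elim 0 fun s' => pr.1 s' x + 1 with hfdef
  set f' := fun x => (μ' x).elim 0 fun s' => pr.1 s' x + 1 with hf'def
  have hfi : f i = 0 := by simp [hfdef, hi]
  have hfj : f j = pr.1 s j + 1 := by simp [hfdef, hj]
  have hfi' : f' i = pr.1 s i + 1 := by simp [hf'def, hμ', Function.update_self]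
  have hfj' : f' j = 0 := by
    simp [hf'def, hμ', Function.update_of_ne (Ne.symm hij), Function.update_self]
  have hrest : ∀ x, x ≠ i → x ≠ j → f' x = f x := by
    intro x h1 h2
    simp [hf'def, hfdef, hμ', Function.update_of_ne h1, Function.update_of_ne h2]
  have hdec : ∀ g : I → ℕ, ∑ x, g x = g i + (g j + ∑ x ∈ (univ.erase i).erase j, g x) := by
    intro g
    rw [← Finset.add_sum_erase _ g (Finset.mem_univ i),
      ← Finset.add_sum_erase _ g (Finset.mem_erase.2 ⟨Ne.symm hij, Finset.mem_univ j⟩)]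
  have hsum : ∑ x ∈ (univ.erase i).erase j, f' x = ∑ x ∈ (univ.erase i).erase j, f x :=
    Finset.sum_congr rfl fun x hx => by
      have h1 := (Finset.mem_erase.1 hx).1
      have h2 := (Finset.mem_erase.1 (Finset.mem_erase.1 hx).2).1
      exact hrest x h2 h1
  show (∑ x, f x) < ∑ x, f' x
  rw [hdec f, hdec f', hfi, hfj, hfi', hfj', hsum]
  omega

lemma exists_fair (P : Prof I S) (pr : Prio I S) (μ : Matching I S) :
    ∃ μ', Relation.ReflTransGen (FairStep P pr) μ μ' ∧ FairForUnassigned P pr μ' := by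
  set B := ∑ i : I, (Finset.univ.sup (fun s => pr.1 s i) + 1) with hB
  have hbd : ∀ ν : Matching I S, Vmeas pr ν ≤ B := by
    intro ν
    apply Finset.sum_le_sum
    intro i _
    cases hν : ν i with
    | none => simp
    | some s =>
      simp only [Option.elim]
      exact Nat.succ_le_succ (Finset.le_sup (f := fun s => pr.1 s i) (Finset.mem_univ s))
  have key : ∀ d (ν : Matching I S), B - Vmeas pr ν ≤ d →
      ∃ μ', Relation.ReflTransGen (FairStep P pr) ν μ' ∧ FairForUnassigned P pr μ' := by
    intro d
    induction d with
    | zero =>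
      intro ν hν
      by_cases hterm : FairForUnassigned P pr ν
      · exact ⟨ν, Relation.ReflTransGen.refl, hterm⟩
      · exfalso
        obtain ⟨ν', _, hlt⟩ := fair_step hterm
        have := hbd ν'
        omega
    | succ d ih =>
      intro ν hν
      by_cases hterm : FairForUnassigned P pr ν
      · exact ⟨ν, Relation.ReflTransGen.refl, hterm⟩
      · obtain ⟨ν', hstep, hlt⟩ := fair_step hterm
        have hb := hbd ν'
        obtain ⟨μ', hrt, h1⟩ := ih ν' (by omega)
        exact ⟨μ', Relation.ReflTransGen.head hstep hrt, h1⟩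
  exact key (B - Vmeas pr μ) μ le_rfl

lemma xiList_nonempty (P : Prof I S) (q : S → ℕ) (L : List I) :
    (xiList P q L).Nonempty := by
  have main : ∀ (L' : List I) (A : Set (Matching I S)), A.Nonempty →
      (L'.foldl xiStep A).Nonempty := by
    intro L'
    induction L' with
    | nil => exact fun A h => h
    | cons i L' ih =>
      intro A hA
      apply ih
      unfold xiStep
      split
      · rename_i hex
        obtain ⟨μ, hμ, h⟩ := hex
        exact ⟨μ, hμ, h⟩
      · exact hA
  refine main L _ ⟨fun _ => none, ?_, fun i => le_rfl⟩
  intro s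
  simp [Feasible]

end Basics

end FAM13
namespace FAM13

abbrev P4 := Prof (Fin 4) (Fin 3)
abbrev M4 := Matching (Fin 4) (Fin 3)

lemma pigeon {μ : M4} (hf : Feasible q13 μ)
    (h0 : μ 0 ≠ none) (h1 : μ 1 ≠ none) (h2 : μ 2 ≠ none) (h3 : μ 3 ≠ none) : False := by
  have hex : ∀ i : Fin 4, ∃ s, μ i = some s := by
    intro i
    cases hμi : μ i with
    | none => exact absurd hμi (by fin_cases i <;> assumption)
    | some s => exact ⟨s, rfl⟩
  choose g hg using hex
  obtain ⟨x, y, hxy, hgxy⟩ := Fintype.exists_ne_map_eq_of_card_lt g (by simp)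
  exact hxy (feas_inj (fun _ => le_rfl) hf (hg x) ((hg y).trans (congrArg some hgxy.symm)))

lemma no_cycle {P : P4} {μ : M4} (m : Fin 4 → ℕ)
    (h : ∀ x y sx sy, μ x = some sx → μ y = some sy →
      (P x).1 (some sx) < (P x).1 (some sy) → m x < m y) :
    ¬ HasImpCycle P μ := by
  rintro ⟨n, a, t, ha, hass, hpref⟩
  have hm : ∀ k : Fin (n + 1), m (a k) < m (a (k + 1)) :=
    fun k => h _ _ _ _ (hass k) (hass (k + 1)) (hpref k)
  obtain ⟨k0, -, hk0⟩ := Finset.exists_max_image (univ : Finset (Fin (n + 1)))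
    (fun k => m (a k)) ⟨0, Finset.mem_univ _⟩
  exact absurd (hk0 (k0 + 1) (Finset.mem_univ _)) (not_le.2 (hm k0))

lemma no_chain {P : P4} {μ : M4}
    (h : ∀ s : Fin 3, (univ.filter fun j => μ j = some s).card < q13 s →
      ∀ x, ¬ (P x).1 (μ x) < (P x).1 (some s)) :
    ¬ HasImpChain P q13 μ := by
  rintro ⟨n, a, t, ha, hpref, hmid, hlast⟩
  exact h _ hlast _ (hpref (Fin.last n))

lemma no_chain_full {P : P4} {μ : M4} (h : ∀ s : Fin 3, ∃ j, μ j = some s) :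
    ¬ HasImpChain P q13 μ := by
  apply no_chain
  intro s hs x
  exfalso
  obtain ⟨j, hj⟩ := h s
  have := occupied hj
  simp only [q13] at hs
  omega

/-- school options for a truthful student 1 -/
lemma jval {P : P4} (hP : P 1 = u13 1) {μ : M4} (hIR : IndivRational P μ)
    {s : Fin 3} (h : μ 1 = some s) : s = 0 ∨ s = 2 := by
  have hh := hIR 1
  rw [h, hP] at hh
  fin_cases s
  · exact Or.inl rfl
  · exact absurd hh (by decide)
  · exact Or.inr rfl

lemma kval {P : P4} (hP : P 2 = u13 2) {μ : M4} (hIR : IndivRational P μ)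
    {s : Fin 3} (h : μ 2 = some s) : s = 0 ∨ s = 2 := by
  have hh := hIR 2
  rw [h, hP] at hh
  fin_cases s
  · exact Or.inl rfl
  · exact absurd hh (by decide)
  · exact Or.inr rfl

lemma hval {P : P4} (hP : P 3 = u13 3) {μ : M4} (hIR : IndivRational P μ)
    {s : Fin 3} (h : μ 3 = some s) : s = 2 := by
  have hh := hIR 3
  rw [h, hP] at hh
  fin_cases s
  · exact absurd hh (by decide)
  · exact absurd hh (by decide)
  · rfl

/-- The FAM property that `IsFAMMech` requires pointwise. -/
def Phi (P : P4) (μ : M4) : Prop :=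
  ∃ μ₁, IsEAMOutcome P q13 [2, 1, 0, 3] μ₁ ∧
    Relation.ReflTransGen (FairStep P pr13) μ₁ μ ∧ FairForUnassigned P pr13 μ

lemma lemA (P : P4) : ∃ μ, Phi P μ := by
  obtain ⟨μ₀, h₀⟩ := xiList_nonempty P q13 [2, 1, 0, 3]
  obtain ⟨μ₁, hsteps, hc, hcy⟩ := exists_terminal P q13 μ₀
  obtain ⟨μ₂, hfs, hFFU⟩ := exists_fair P pr13 μ₁
  exact ⟨μ₂, μ₁, ⟨μ₀, h₀, hsteps, hc, hcy⟩, hfs, hFFU⟩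

lemma xiList_eq (P : P4) :
    xiList P q13 [2, 1, 0, 3] =
      xiStep (xiStep (xiStep (xiStep
        {μ : M4 | Feasible q13 μ ∧ IndivRational P μ} 2) 1) 0) 3 := by
  simp [xiList, List.foldl]

end FAM13
namespace FAM13

lemma mem_xiList_three {P : P4} {μ : M4} (hfeas : Feasible q13 μ) (hIR : IndivRational P μ)
    (h2 : μ 2 ≠ none) (h1 : μ 1 ≠ none) (h0 : μ 0 ≠ none) :
    μ ∈ xiList P q13 [2, 1, 0, 3] := by
  rw [xiList_eq]
  set A0 : Set M4 := {ν | Feasible q13 ν ∧ IndivRational P ν} with hA0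
  have m0 : μ ∈ A0 := ⟨hfeas, hIR⟩
  rw [xiStep_pos (A := A0) ⟨μ, m0, h2⟩]
  set A1 : Set M4 := {ν ∈ A0 | ν 2 ≠ none} with hA1
  have m1 : μ ∈ A1 := ⟨m0, h2⟩
  rw [xiStep_pos (A := A1) ⟨μ, m1, h1⟩]
  set A2 : Set M4 := {ν ∈ A1 | ν 1 ≠ none} with hA2
  have m2 : μ ∈ A2 := ⟨m1, h1⟩
  rw [xiStep_pos (A := A2) ⟨μ, m2, h0⟩]
  set A3 : Set M4 := {ν ∈ A2 | ν 0 ≠ none} with hA3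
  have m3 : μ ∈ A3 := ⟨m2, h0⟩
  rw [xiStep_neg ?hneg]
  · exact m3
  case hneg =>
    rintro ⟨ν, ⟨⟨⟨⟨hf, -⟩, hν2⟩, hν1⟩, hν0⟩, hν3⟩
    exact pigeon hf hν0 hν1 hν2 hν3

lemma feas_mu13 : Feasible q13 mu13 := by intro s; fin_cases s <;> decide

lemma mem_mu13 {P : P4} (h1 : P 1 = u13 1) (h2 : P 2 = u13 2)
    (h0 : (P 0).1 none ≤ (P 0).1 (some 1)) :
    mu13 ∈ xiList P q13 [2, 1, 0, 3] := by
  apply mem_xiList_three feas_mu13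
  · intro i
    fin_cases i
    · exact h0
    · show (P 1).1 none ≤ (P 1).1 (mu13 1); rw [h1]; decide
    · show (P 2).1 none ≤ (P 2).1 (mu13 2); rw [h2]; decide
    · exact le_rfl
  · decide
  · decide
  · decide

lemma term_mu13 {P : P4} (h1 : P 1 = u13 1) (h2 : P 2 = u13 2) :
    ¬ HasImpChain P q13 mu13 ∧ ¬ HasImpCycle P mu13 := by
  constructor
  · exact no_chain_full (by intro s; fin_cases s; exacts [⟨1, rfl⟩, ⟨0, rfl⟩, ⟨2, rfl⟩])
  · apply no_cycle ![0, 1, 2, 0]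
    intro x y sx sy hx hy hpref
    fin_cases x
    · obtain rfl := (Option.some.inj hx)
      fin_cases y
      · obtain rfl := (Option.some.inj hy)
        exact absurd hpref (lt_irrefl _)
      · decide
      · decide
      · cases hy
    · obtain rfl := (Option.some.inj hx)
      have hpref' : (u13 1).1 (some 0) < (u13 1).1 (some sy) := by rw [← h1]; exact hpref
      clear hpref
      fin_cases y
      · obtain rfl := (Option.some.inj hy); exact absurd hpref' (by decide)
      · obtain rfl := (Option.some.inj hy); exact absurd hpref' (lt_irrefl _)
      · decide
      · cases hy
    · obtain rfl := (Option.some.inj hx)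
      have hpref' : (u13 2).1 (some 2) < (u13 2).1 (some sy) := by rw [← h2]; exact hpref
      clear hpref
      fin_cases y
      · obtain rfl := (Option.some.inj hy); exact absurd hpref' (by decide)
      · obtain rfl := (Option.some.inj hy); exact absurd hpref' (by decide)
      · obtain rfl := (Option.some.inj hy); exact absurd hpref' (lt_irrefl _)
      · cases hy
    · cases hx

lemma dev3 (e : IndPref (Fin 3)) :
    ∃ μ, Phi (Function.update u13 3 e) μ ∧ (u13 3).1 (μ 3) ≤ (u13 3).1 (mu13 3) := by
  set P := Function.update u13 3 e with hPdef
  have hP0 : P 0 = u13 0 := Function.update_of_ne (by decide) _ _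
  have hP1 : P 1 = u13 1 := Function.update_of_ne (by decide) _ _
  have hP2 : P 2 = u13 2 := Function.update_of_ne (by decide) _ _
  have hP3 : P 3 = e := Function.update_self _ _ _
  have hEAM : IsEAMOutcome P q13 [2, 1, 0, 3] mu13 :=
    ⟨mu13, mem_mu13 hP1 hP2 (by rw [hP0]; decide), Relation.ReflTransGen.refl,
      (term_mu13 hP1 hP2).1, (term_mu13 hP1 hP2).2⟩
  rcases lt_or_gt_of_ne (e.2.ne (show (some 1 : Option (Fin 3)) ≠ none by decide))
    with hcase | hcase
  · -- h finds b unacceptable: mu13 is already fair for unassigned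
    refine ⟨mu13, ⟨mu13, hEAM, Relation.ReflTransGen.refl, ?_⟩, le_rfl⟩
    rintro ⟨x, s, y, hx, hlt, hy, hpr⟩
    fin_cases x
    · cases hx
    · cases hx
    · cases hx
    · have hlt' : e.1 none < e.1 (some s) := by rw [← hP3]; exact hlt
      clear hlt
      fin_cases y
      · obtain rfl := (Option.some.inj hy); omega
      · obtain rfl := (Option.some.inj hy); exact absurd hpr (by decide)
      · obtain rfl := (Option.some.inj hy); exact absurd hpr (by decide)
      · cases hy
  · -- h finds b acceptable: two fairness steps
    refine ⟨![some 0, none, some 2, some 1], ⟨mu13, hEAM, ?_, ?_⟩, by decide⟩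
    · have step1 : FairStep P pr13 mu13 ![none, some 0, some 2, some 1] := by
        refine ⟨3, 1, 0, rfl, ?_, rfl, by decide, ?_, by decide⟩
        · rw [hP3]; exact hcase
        · intro j' hj'
          fin_cases j'
          · decide
          · exact absurd (Option.some.inj hj') (by decide)
          · exact absurd (Option.some.inj hj') (by decide)
          · cases hj'
      have step2 : FairStep P pr13 ![none, some 0, some 2, some 1]
          ![some 0, none, some 2, some 1] := by
        refine ⟨0, 0, 1, rfl, ?_, rfl, by decide, ?_, by decide⟩
        · rw [hP0]; decide
        · intro j' hj'
          fin_cases j'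
          · cases hj'
          · decide
          · exact absurd (Option.some.inj hj') (by decide)
          · exact absurd (Option.some.inj hj') (by decide)
      exact Relation.ReflTransGen.head step1 (Relation.ReflTransGen.single step2)
    · rintro ⟨x, s, y, hx, hlt, hy, hpr⟩
      fin_cases x
      · cases hx
      · fin_cases y
        · obtain rfl := (Option.some.inj hy); exact absurd hpr (by decide)
        · cases hy
        · obtain rfl := (Option.some.inj hy); exact absurd hpr (by decide)
        · obtain rfl := (Option.some.inj hy); exact absurd hpr (by decide)
      · cases hx
      · cases hx

end FAM13
namespace FAM13

lemma FFU_mu13 {P : P4} (h3 : P 3 = u13 3) : FairForUnassigned P pr13 mu13 := by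
  rintro ⟨x, s, y, hx, hlt, hy, hpr⟩
  fin_cases x
  · cases hx
  · cases hx
  · cases hx
  · have hlt' : (u13 3).1 none < (u13 3).1 (some s) := by rw [← h3]; exact hlt
    clear hlt
    fin_cases y
    · obtain rfl := (Option.some.inj hy); exact absurd hlt' (by decide)
    · obtain rfl := (Option.some.inj hy); exact absurd hpr (by decide)
    · obtain rfl := (Option.some.inj hy); exact absurd hpr (by decide)
    · cases hy

lemma dev0 (f : IndPref (Fin 3)) :
    ∃ μ, Phi (Function.update u13 0 f) μ ∧ (u13 0).1 (μ 0) ≤ (u13 0).1 (mu13 0) := by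
  set P := Function.update u13 0 f with hPdef
  have hP0 : P 0 = f := Function.update_self _ _ _
  have hP1 : P 1 = u13 1 := Function.update_of_ne (by decide) _ _
  have hP2 : P 2 = u13 2 := Function.update_of_ne (by decide) _ _
  have hP3 : P 3 = u13 3 := Function.update_of_ne (by decide) _ _
  rcases lt_or_gt_of_ne (f.2.ne (show (some 1 : Option (Fin 3)) ≠ none by decide))
    with hcase | hcase
  · -- f rejects b:  EAM outcome [none, j→c, k→a, none], one fair step gives
    -- [none, none, k→a, h→c]
    set ν₁ : M4 := ![none, some 2, some 0, none] with hν₁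
    set νf : M4 := ![none, none, some 0, some 2] with hνf
    have hmem : ν₁ ∈ xiList P q13 [2, 1, 0, 3] := by
      rw [xiList_eq]
      set A0 : Set M4 := {ν | Feasible q13 ν ∧ IndivRational P ν} with hA0
      have m0 : ν₁ ∈ A0 := by
        refine ⟨by intro s; fin_cases s <;> decide, ?_⟩
        intro i
        fin_cases i
        · exact le_rfl
        · show (P 1).1 none ≤ (P 1).1 (ν₁ 1); rw [hP1]; decide
        · show (P 2).1 none ≤ (P 2).1 (ν₁ 2); rw [hP2]; decide
        · exact le_rfl
      rw [xiStep_pos (A := A0) ⟨ν₁, m0, by decide⟩]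
      set A1 : Set M4 := {ν ∈ A0 | ν 2 ≠ none} with hA1
      have m1 : ν₁ ∈ A1 := ⟨m0, by decide⟩
      rw [xiStep_pos (A := A1) ⟨ν₁, m1, by decide⟩]
      set A2 : Set M4 := {ν ∈ A1 | ν 1 ≠ none} with hA2
      have m2 : ν₁ ∈ A2 := ⟨m1, by decide⟩
      have hneg0 : ¬ ∃ ν ∈ A2, ν 0 ≠ none := by
        rintro ⟨ν, ⟨⟨⟨hf, hIR⟩, hν2⟩, hν1⟩, hν0⟩
        obtain ⟨s1, hs1⟩ := Option.ne_none_iff_exists'.1 hν1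
        obtain ⟨s2, hs2⟩ := Option.ne_none_iff_exists'.1 hν2
        obtain ⟨s0, hs0⟩ := Option.ne_none_iff_exists'.1 hν0
        have hj := jval hP1 hIR hs1
        have hk := kval hP2 hIR hs2
        have h12 : s1 ≠ s2 := fun he => by
          subst he; exact absurd (feas_inj (fun _ => le_rfl) hf hs1 hs2) (by decide)
        have h01 : s0 ≠ s1 := fun he => by
          subst he; exact absurd (feas_inj (fun _ => le_rfl) hf hs0 hs1) (by decide)
        have h02 : s0 ≠ s2 := fun he => by
          subst he; exact absurd (feas_inj (fun _ => le_rfl) hf hs0 hs2) (by decide)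
        have hs0b : s0 = 1 := by
          rcases hj with rfl | rfl <;> rcases hk with rfl | rfl
          · exact absurd rfl h12
          · fin_cases s0
            · exact absurd rfl h01
            · rfl
            · exact absurd rfl h02
          · fin_cases s0
            · exact absurd rfl h02
            · rfl
            · exact absurd rfl h01
          · exact absurd rfl h12
        subst hs0b
        have hIR0 := hIR 0
        rw [hs0, hP0] at hIR0
        omega
      rw [xiStep_neg hneg0]
      have hneg3 : ¬ ∃ ν ∈ A2, ν 3 ≠ none := by
        rintro ⟨ν, ⟨⟨⟨hf, hIR⟩, hν2⟩, hν1⟩, hν3⟩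
        obtain ⟨s1, hs1⟩ := Option.ne_none_iff_exists'.1 hν1
        obtain ⟨s2, hs2⟩ := Option.ne_none_iff_exists'.1 hν2
        obtain ⟨s3, hs3⟩ := Option.ne_none_iff_exists'.1 hν3
        obtain rfl := hval hP3 hIR hs3
        have hj := jval hP1 hIR hs1
        have hk := kval hP2 hIR hs2
        have h12 : s1 ≠ s2 := fun he => by
          subst he; exact absurd (feas_inj (fun _ => le_rfl) hf hs1 hs2) (by decide)
        rcases hj with rfl | rfl
        · rcases hk with rfl | rfl
          · exact absurd rfl h12
          · exact absurd (feas_inj (fun _ => le_rfl) hf hs2 hs3) (by decide)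
        · exact absurd (feas_inj (fun _ => le_rfl) hf hs1 hs3) (by decide)
      rw [xiStep_neg hneg3]
      exact m2
    have hchain : ¬ HasImpChain P q13 ν₁ := by
      apply no_chain
      intro s
      fin_cases s
      · intro hs; exact absurd hs (by decide)
      · intro hs x hcon
        fin_cases x
        · have hcon' : f.1 none < f.1 (some 1) := by rw [← hP0]; exact hcon
          omega
        · have hcon' : (u13 1).1 (some 2) < (u13 1).1 (some 1) := by rw [← hP1]; exact hcon
          exact absurd hcon' (by decide)
        · have hcon' : (u13 2).1 (some 0) < (u13 2).1 (some 1) := by rw [← hP2]; exact hcon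
          exact absurd hcon' (by decide)
        · have hcon' : (u13 3).1 none < (u13 3).1 (some 1) := by rw [← hP3]; exact hcon
          exact absurd hcon' (by decide)
      · intro hs; exact absurd hs (by decide)
    have hcycle : ¬ HasImpCycle P ν₁ := by
      apply no_cycle ![0, 1, 0, 0]
      intro x y sx sy hx hy hpref
      fin_cases x
      · cases hx
      · obtain rfl := (Option.some.inj hx)
        have hpref' : (u13 1).1 (some 2) < (u13 1).1 (some sy) := by rw [← hP1]; exact hpref
        fin_cases y
        · cases hy
        · obtain rfl := (Option.some.inj hy); exact absurd hpref' (lt_irrefl _)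
        · obtain rfl := (Option.some.inj hy); exact absurd hpref' (by decide)
        · cases hy
      · obtain rfl := (Option.some.inj hx)
        have hpref' : (u13 2).1 (some 0) < (u13 2).1 (some sy) := by rw [← hP2]; exact hpref
        fin_cases y
        · cases hy
        · obtain rfl := (Option.some.inj hy); decide
        · obtain rfl := (Option.some.inj hy); exact absurd hpref' (lt_irrefl _)
        · cases hy
      · cases hx
    have hstep : FairStep P pr13 ν₁ νf := by
      refine ⟨3, 2, 1, rfl, ?_, rfl, by decide, ?_, by decide⟩
      · rw [hP3]; decide
      · intro j' hj'
        fin_cases j'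
        · cases hj'
        · decide
        · exact absurd (Option.some.inj hj') (by decide)
        · cases hj'
    refine ⟨νf, ⟨ν₁, ⟨ν₁, hmem, Relation.ReflTransGen.refl, hchain, hcycle⟩,
      Relation.ReflTransGen.single hstep, ?_⟩, by decide⟩
    rintro ⟨x, s, y, hx, hlt, hy, hpr⟩
    fin_cases x
    · fin_cases y
      · cases hy
      · cases hy
      · obtain rfl := (Option.some.inj hy); exact absurd hpr (by decide)
      · obtain rfl := (Option.some.inj hy); exact absurd hpr (by decide)
    · fin_cases y
      · cases hy
      · cases hy
      · obtain rfl := (Option.some.inj hy); exact absurd hpr (by decide)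
      · obtain rfl := (Option.some.inj hy); exact absurd hpr (by decide)
    · cases hx
    · cases hx
  · -- f accepts b: outcome mu13
    refine ⟨mu13, ⟨mu13, ⟨mu13, mem_mu13 hP1 hP2 (by rw [hP0]; exact hcase.le),
      Relation.ReflTransGen.refl, (term_mu13 hP1 hP2).1, (term_mu13 hP1 hP2).2⟩,
      Relation.ReflTransGen.refl, FFU_mu13 hP3⟩, le_rfl⟩

end FAM13
namespace FAM13

lemma dev1 (g : IndPref (Fin 3)) :
    ∃ μ, Phi (Function.update u13 1 g) μ ∧ (u13 1).1 (μ 1) ≤ (u13 1).1 (mu13 1) := by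
  set P := Function.update u13 1 g with hPdef
  have hP0 : P 0 = u13 0 := Function.update_of_ne (by decide) _ _
  have hP1 : P 1 = g := Function.update_self _ _ _
  have hP2 : P 2 = u13 2 := Function.update_of_ne (by decide) _ _
  have hP3 : P 3 = u13 3 := Function.update_of_ne (by decide) _ _
  have hb := lt_or_gt_of_ne (g.2.ne (show (some 1 : Option (Fin 3)) ≠ none by decide))
  have ha := lt_or_gt_of_ne (g.2.ne (show (some 0 : Option (Fin 3)) ≠ none by decide))
  have hc := lt_or_gt_of_ne (g.2.ne (show (some 2 : Option (Fin 3)) ≠ none by decide))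
  rcases hb with hb | hb
  · rcases ha with ha | ha
    · rcases hc with hc | hc
      · -- T = ∅ : outcome [i→b, none, k→a, h→c]
        set ν : M4 := ![some 1, none, some 0, some 2] with hν
        have hmem : ν ∈ xiList P q13 [2, 1, 0, 3] := by
          rw [xiList_eq]
          set A0 : Set M4 := {ν' | Feasible q13 ν' ∧ IndivRational P ν'} with hA0
          have m0 : ν ∈ A0 := by
            refine ⟨by intro s; fin_cases s <;> decide, ?_⟩
            intro i
            fin_cases i
            · show (P 0).1 none ≤ (P 0).1 (ν 0); rw [hP0]; decide
            · exact le_rfl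
            · show (P 2).1 none ≤ (P 2).1 (ν 2); rw [hP2]; decide
            · show (P 3).1 none ≤ (P 3).1 (ν 3); rw [hP3]; decide
          rw [xiStep_pos (A := A0) ⟨ν, m0, by decide⟩]
          set A1 : Set M4 := {ν' ∈ A0 | ν' 2 ≠ none} with hA1
          have m1 : ν ∈ A1 := ⟨m0, by decide⟩
          have hneg1 : ¬ ∃ ν' ∈ A1, ν' 1 ≠ none := by
            rintro ⟨ν', ⟨⟨hf, hIR⟩, hν2⟩, hν1⟩
            obtain ⟨s1, hs1⟩ := Option.ne_none_iff_exists'.1 hν1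
            have hIR1 := hIR 1
            rw [hs1, hP1] at hIR1
            fin_cases s1
            exacts [absurd hIR1 (not_le.2 ha), absurd hIR1 (not_le.2 hb),
              absurd hIR1 (not_le.2 hc)]
          rw [xiStep_neg hneg1]
          rw [xiStep_pos (A := A1) ⟨ν, m1, by decide⟩]
          set A2 : Set M4 := {ν' ∈ A1 | ν' 0 ≠ none} with hA2
          have m2 : ν ∈ A2 := ⟨m1, by decide⟩
          rw [xiStep_pos (A := A2) ⟨ν, m2, by decide⟩]
          exact ⟨m2, by decide⟩
        have hchain : ¬ HasImpChain P q13 ν :=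
          no_chain_full (by intro s; fin_cases s; exacts [⟨2, rfl⟩, ⟨0, rfl⟩, ⟨3, rfl⟩])
        have hcycle : ¬ HasImpCycle P ν := by
          apply no_cycle ![0, 0, 1, 2]
          intro x y sx sy hx hy hpref
          fin_cases x
          · obtain rfl := (Option.some.inj hx)
            have hpref' : (u13 0).1 (some 1) < (u13 0).1 (some sy) := by rw [← hP0]; exact hpref
            fin_cases y
            · obtain rfl := (Option.some.inj hy); exact absurd hpref' (lt_irrefl _)
            · cases hy
            · obtain rfl := (Option.some.inj hy); decide
            · obtain rfl := (Option.some.inj hy); exact absurd hpref' (by decide)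
          · cases hx
          · obtain rfl := (Option.some.inj hx)
            have hpref' : (u13 2).1 (some 0) < (u13 2).1 (some sy) := by rw [← hP2]; exact hpref
            fin_cases y
            · obtain rfl := (Option.some.inj hy); exact absurd hpref' (by decide)
            · cases hy
            · obtain rfl := (Option.some.inj hy); exact absurd hpref' (lt_irrefl _)
            · obtain rfl := (Option.some.inj hy); decide
          · obtain rfl := (Option.some.inj hx)
            have hpref' : (u13 3).1 (some 2) < (u13 3).1 (some sy) := by rw [← hP3]; exact hpref
            fin_cases y
            · obtain rfl := (Option.some.inj hy); exact absurd hpref' (by decide)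
            · cases hy
            · obtain rfl := (Option.some.inj hy); exact absurd hpref' (by decide)
            · obtain rfl := (Option.some.inj hy); exact absurd hpref' (lt_irrefl _)
        refine ⟨ν, ⟨ν, ⟨ν, hmem, Relation.ReflTransGen.refl, hchain, hcycle⟩,
          Relation.ReflTransGen.refl, ?_⟩, by decide⟩
        rintro ⟨x, s, y, hx, hlt, hy, hpr⟩
        fin_cases x
        · cases hx
        · have hlt' : g.1 none < g.1 (some s) := by rw [← hP1]; exact hlt
          fin_cases y
          · obtain rfl := (Option.some.inj hy); omega
          · cases hy
          · obtain rfl := (Option.some.inj hy); exact absurd hpr (by decide)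
          · obtain rfl := (Option.some.inj hy); exact absurd hpr (by decide)
        · cases hx
        · cases hx
      · -- T = {c} : EAM outcome [i→b, j→c, k→a, none], fair step gives
        -- [i→b, none, k→a, h→c]
        set ν₁ : M4 := ![some 1, some 2, some 0, none] with hν₁
        set νf : M4 := ![some 1, none, some 0, some 2] with hνf
        have hmem : ν₁ ∈ xiList P q13 [2, 1, 0, 3] := by
          apply mem_xiList_three
          · intro s; fin_cases s <;> decide
          · intro i
            fin_cases i
            · show (P 0).1 none ≤ (P 0).1 (ν₁ 0); rw [hP0]; decide
            · show (P 1).1 none ≤ (P 1).1 (ν₁ 1); rw [hP1]; exact hc.le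
            · show (P 2).1 none ≤ (P 2).1 (ν₁ 2); rw [hP2]; decide
            · exact le_rfl
          · decide
          · decide
          · decide
        have hchain : ¬ HasImpChain P q13 ν₁ :=
          no_chain_full (by intro s; fin_cases s; exacts [⟨2, rfl⟩, ⟨0, rfl⟩, ⟨1, rfl⟩])
        have hcycle : ¬ HasImpCycle P ν₁ := by
          apply no_cycle ![0, 2, 1, 0]
          intro x y sx sy hx hy hpref
          fin_cases x
          · obtain rfl := (Option.some.inj hx)
            have hpref' : (u13 0).1 (some 1) < (u13 0).1 (some sy) := by rw [← hP0]; exact hpref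
            fin_cases y
            · obtain rfl := (Option.some.inj hy); exact absurd hpref' (lt_irrefl _)
            · obtain rfl := (Option.some.inj hy); exact absurd hpref' (by decide)
            · obtain rfl := (Option.some.inj hy); decide
            · cases hy
          · obtain rfl := (Option.some.inj hx)
            have hpref' : g.1 (some 2) < g.1 (some sy) := by rw [← hP1]; exact hpref
            fin_cases y
            · obtain rfl := (Option.some.inj hy); omega
            · obtain rfl := (Option.some.inj hy); exact absurd hpref' (lt_irrefl _)
            · obtain rfl := (Option.some.inj hy); omega
            · cases hy
          · obtain rfl := (Option.some.inj hx)
            have hpref' : (u13 2).1 (some 0) < (u13 2).1 (some sy) := by rw [← hP2]; exact hpref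
            fin_cases y
            · obtain rfl := (Option.some.inj hy); exact absurd hpref' (by decide)
            · obtain rfl := (Option.some.inj hy); decide
            · obtain rfl := (Option.some.inj hy); exact absurd hpref' (lt_irrefl _)
            · cases hy
          · cases hx
        have hstep : FairStep P pr13 ν₁ νf := by
          refine ⟨3, 2, 1, rfl, ?_, rfl, by decide, ?_, by decide⟩
          · rw [hP3]; decide
          · intro j' hj'
            fin_cases j'
            · exact absurd (Option.some.inj hj') (by decide)
            · decide
            · exact absurd (Option.some.inj hj') (by decide)
            · cases hj'
        refine ⟨νf, ⟨ν₁, ⟨ν₁, hmem, Relation.ReflTransGen.refl, hchain, hcycle⟩,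
          Relation.ReflTransGen.single hstep, ?_⟩, by decide⟩
        rintro ⟨x, s, y, hx, hlt, hy, hpr⟩
        fin_cases x
        · cases hx
        · have hlt' : g.1 none < g.1 (some s) := by rw [← hP1]; exact hlt
          fin_cases y
          · obtain rfl := (Option.some.inj hy); omega
          · cases hy
          · obtain rfl := (Option.some.inj hy); exact absurd hpr (by decide)
          · obtain rfl := (Option.some.inj hy); exact absurd hpr (by decide)
        · cases hx
        · cases hx
    · -- g none < g a, g b < g none : outcome mu13
      have hmem : mu13 ∈ xiList P q13 [2, 1, 0, 3] := by
        apply mem_xiList_three feas_mu13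
        · intro i
          fin_cases i
          · show (P 0).1 none ≤ (P 0).1 (mu13 0); rw [hP0]; decide
          · show (P 1).1 none ≤ (P 1).1 (mu13 1); rw [hP1]; exact ha.le
          · show (P 2).1 none ≤ (P 2).1 (mu13 2); rw [hP2]; decide
          · exact le_rfl
        · decide
        · decide
        · decide
      have hchain : ¬ HasImpChain P q13 mu13 :=
        no_chain_full (by intro s; fin_cases s; exacts [⟨1, rfl⟩, ⟨0, rfl⟩, ⟨2, rfl⟩])
      have hcycle : ¬ HasImpCycle P mu13 := by
        apply no_cycle ![0, 1, 2, 0]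
        intro x y sx sy hx hy hpref
        fin_cases x
        · obtain rfl := (Option.some.inj hx)
          have hpref' : (u13 0).1 (some 1) < (u13 0).1 (some sy) := by rw [← hP0]; exact hpref
          fin_cases y
          · obtain rfl := (Option.some.inj hy); exact absurd hpref' (lt_irrefl _)
          · obtain rfl := (Option.some.inj hy); decide
          · obtain rfl := (Option.some.inj hy); exact absurd hpref' (by decide)
          · cases hy
        · obtain rfl := (Option.some.inj hx)
          have hpref' : g.1 (some 0) < g.1 (some sy) := by rw [← hP1]; exact hpref
          fin_cases y
          · obtain rfl := (Option.some.inj hy); omega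
          · obtain rfl := (Option.some.inj hy); exact absurd hpref' (lt_irrefl _)
          · obtain rfl := (Option.some.inj hy); decide
          · cases hy
        · obtain rfl := (Option.some.inj hx)
          have hpref' : (u13 2).1 (some 2) < (u13 2).1 (some sy) := by rw [← hP2]; exact hpref
          fin_cases y
          · obtain rfl := (Option.some.inj hy); exact absurd hpref' (by decide)
          · obtain rfl := (Option.some.inj hy); exact absurd hpref' (by decide)
          · obtain rfl := (Option.some.inj hy); exact absurd hpref' (lt_irrefl _)
          · cases hy
        · cases hx
      exact ⟨mu13, ⟨mu13, ⟨mu13, hmem, Relation.ReflTransGen.refl, hchain, hcycle⟩,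
        Relation.ReflTransGen.refl, FFU_mu13 hP3⟩, le_rfl⟩
  · -- g none < g b : outcome [i→a, j→b, k→c, none]
    set ν : M4 := ![some 0, some 1, some 2, none] with hν
    have hmem : ν ∈ xiList P q13 [2, 1, 0, 3] := by
      apply mem_xiList_three
      · intro s; fin_cases s <;> decide
      · intro i
        fin_cases i
        · show (P 0).1 none ≤ (P 0).1 (ν 0); rw [hP0]; decide
        · show (P 1).1 none ≤ (P 1).1 (ν 1); rw [hP1]; exact hb.le
        · show (P 2).1 none ≤ (P 2).1 (ν 2); rw [hP2]; decide
        · exact le_rfl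
      · decide
      · decide
      · decide
    have hchain : ¬ HasImpChain P q13 ν :=
      no_chain_full (by intro s; fin_cases s; exacts [⟨0, rfl⟩, ⟨1, rfl⟩, ⟨2, rfl⟩])
    have hcycle : ¬ HasImpCycle P ν := by
      apply no_cycle ![1, 0, 2, 0]
      intro x y sx sy hx hy hpref
      fin_cases x
      · obtain rfl := (Option.some.inj hx)
        have hpref' : (u13 0).1 (some 0) < (u13 0).1 (some sy) := by rw [← hP0]; exact hpref
        fin_cases y
        · obtain rfl := (Option.some.inj hy); exact absurd hpref' (lt_irrefl _)
        · obtain rfl := (Option.some.inj hy); exact absurd hpref' (by decide)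
        · obtain rfl := (Option.some.inj hy); exact absurd hpref' (by decide)
        · cases hy
      · obtain rfl := (Option.some.inj hx)
        fin_cases y
        · obtain rfl := (Option.some.inj hy); decide
        · obtain rfl := (Option.some.inj hy)
          have hpref' : g.1 (some 1) < g.1 (some 1) := by rw [← hP1]; exact hpref
          exact absurd hpref' (lt_irrefl _)
        · obtain rfl := (Option.some.inj hy); decide
        · cases hy
      · obtain rfl := (Option.some.inj hx)
        have hpref' : (u13 2).1 (some 2) < (u13 2).1 (some sy) := by rw [← hP2]; exact hpref
        fin_cases y
        · obtain rfl := (Option.some.inj hy); exact absurd hpref' (by decide)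
        · obtain rfl := (Option.some.inj hy); exact absurd hpref' (by decide)
        · obtain rfl := (Option.some.inj hy); exact absurd hpref' (lt_irrefl _)
        · cases hy
      · cases hx
    refine ⟨ν, ⟨ν, ⟨ν, hmem, Relation.ReflTransGen.refl, hchain, hcycle⟩,
      Relation.ReflTransGen.refl, ?_⟩, by decide⟩
    rintro ⟨x, s, y, hx, hlt, hy, hpr⟩
    fin_cases x
    · cases hx
    · cases hx
    · cases hx
    · have hlt' : (u13 3).1 none < (u13 3).1 (some s) := by rw [← hP3]; exact hlt
      fin_cases y
      · obtain rfl := (Option.some.inj hy); exact absurd hlt' (by decide)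
      · obtain rfl := (Option.some.inj hy); exact absurd hlt' (by decide)
      · obtain rfl := (Option.some.inj hy); exact absurd hpr (by decide)
      · cases hy

end FAM13
namespace FAM13

def Good (P : P4) (μ : M4) : Prop :=
  Phi P μ ∧ (P = u13 → μ = mu13) ∧
    ∀ i : Fin 4, (∀ j, j ≠ i → P j = u13 j) → (u13 i).1 (μ i) ≤ (u13 i).1 (mu13 i)

lemma Phi_u13 : Phi u13 mu13 :=
  ⟨mu13, ⟨mu13, mem_mu13 rfl rfl (by decide), Relation.ReflTransGen.refl,
    (term_mu13 rfl rfl).1, (term_mu13 rfl rfl).2⟩,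
    Relation.ReflTransGen.refl, FFU_mu13 rfl⟩

lemma good_exists (P : P4) : ∃ μ, Good P μ := by
  by_cases hP : P = u13
  · subst hP
    exact ⟨mu13, Phi_u13, fun _ => rfl, fun i _ => le_rfl⟩
  · by_cases hdev : ∃ i, ∀ j, j ≠ i → P j = u13 j
    · obtain ⟨i, hi⟩ := hdev
      have hupd : Function.update u13 i (P i) = P := by
        funext j
        by_cases hj : j = i
        · subst hj; exact Function.update_self _ _ _
        · rw [Function.update_of_ne hj]; exact (hi j hj).symm
      have huniq : ∀ i', (∀ j, j ≠ i' → P j = u13 j) → i' = i := by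
        intro i' hi'
        by_contra hne
        apply hP
        funext j
        by_cases hj : j = i
        · subst hj; exact hi' j (fun h => hne h.symm)
        · exact hi j hj
      have key : ∃ μ, Phi P μ ∧ (u13 i).1 (μ i) ≤ (u13 i).1 (mu13 i) := by
        fin_cases i
        · obtain ⟨μ, h1, h2⟩ := dev0 (P 0)
          exact ⟨μ, by rw [← hupd]; exact h1, h2⟩
        · obtain ⟨μ, h1, h2⟩ := dev1 (P 1)
          exact ⟨μ, by rw [← hupd]; exact h1, h2⟩
        · obtain ⟨μ, h1⟩ := lemA P
          have hbd : ∀ o : Option (Fin 3), (u13 2).1 o ≤ (u13 2).1 (mu13 2) := by decide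
          exact ⟨μ, h1, hbd _⟩
        · obtain ⟨μ, h1, h2⟩ := dev3 (P 3)
          exact ⟨μ, by rw [← hupd]; exact h1, h2⟩
      obtain ⟨μ, h1, h2⟩ := key
      refine ⟨μ, h1, fun h => absurd h hP, ?_⟩
      intro i' hi'
      obtain rfl := huniq i' hi'
      exact h2
    · obtain ⟨μ, h1⟩ := lemA P
      exact ⟨μ, h1, fun h => absurd h hP, fun i hi => absurd ⟨i, hi⟩ hdev⟩

noncomputable def psi : Mechanism (Fin 4) (Fin 3) := fun P => (good_exists P).choose

lemma psi_good (P : P4) : Good P (psi P) := (good_exists P).choose_spec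

lemma psi_u13 : psi u13 = mu13 := (psi_good u13).2.1 rfl

set_option maxRecDepth 100000 in
lemma msize_mu13 : msize mu13 = 3 := by decide

set_option maxRecDepth 100000 in
lemma msize_muDA13 : msize muDA13 = 2 := by decide

set_option maxRecDepth 100000 in
lemma stable_DA : Stable u13 pr13 q13 muDA13 := by
  unfold Stable Feasible IndivRational NonWasteful Fair; decide

set_option maxRecDepth 1000000 in
lemma stable2 : ∀ μ, Stable u13 pr13 q13 μ → msize μ = 2 := by
  unfold Stable Feasible IndivRational NonWasteful Fair msize; decide

end FAM13


/-- there are a FAM mechanism ψ (with EAM ordering k,j,i,h), a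
profile, and a Nash equilibrium of ψ (namely truth-telling) whose outcome
assigns strictly more students than every stable matching. -/
theorem FAM_beats_stable_in_equilibrium :
    ∃ ψ : Mechanism (Fin 4) (Fin 3), IsFAMMech q13 pr13 [2, 1, 0, 3] ψ ∧
      ψ u13 = mu13 ∧ NashEq u13 ψ u13 ∧ msize mu13 = 3 ∧
      Stable u13 pr13 q13 muDA13 ∧ msize muDA13 = 2 ∧
      (∀ μ, Stable u13 pr13 q13 μ → msize μ = 2) ∧
      ∀ μ, Stable u13 pr13 q13 μ → msize μ < msize (ψ u13) := by
  refine ⟨FAM13.psi, fun P => (FAM13.psi_good P).1, FAM13.psi_u13, ?_,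
    FAM13.msize_mu13, FAM13.stable_DA, FAM13.msize_muDA13, FAM13.stable2, ?_⟩
  · intro i Pi''
    rw [FAM13.psi_u13]
    exact (FAM13.psi_good _).2.2 i (fun j hj => Function.update_of_ne hj _ _)
  · intro μ hμ
    have h2 := FAM13.stable2 μ hμ
    have h3 := FAM13.msize_mu13
    rw [FAM13.psi_u13]
    omega
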